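/- Let n ≥ 0 and let q be a positive integer, and set N_r := 1 + q^r + q^{2r} + … + q^{nr} for r ≥ 1 (when q is a prime power this is the number of 𝔽_{q^r}-points of ℙ^n). With a_i := (1/i)·Σ_{d ∣ i} μ(i/d)·N_d and π_w := Σ_{λ : |λ| = w} (−1)^{ℓ(λ)} · Π_{i≥1} C(a_i, λ_i) (sum over all partitions λ of weight w), one has π_w = 0 for every w ≥ n + 2. -/

import Mathlib

open scoped Classical

/-- Generalized binomial coefficient `C(a, k) = a(a-1)⋯(a-k+1)/k!` for `a : ℚ`. -/
def genChoose (a : ℚ) (k : ℕ) : ℚ :=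
  (∏ j ∈ Finset.range k, (a - (j : ℚ))) / (Nat.factorial k : ℚ)

/-- `a N i = (1/i) Σ_{d ∣ i} μ(i/d) N d`, the Möbius convolution divided by `i`. -/
noncomputable def moebiusConv (N : ℕ → ℚ) (i : ℕ) : ℚ :=
  (1 / (i : ℚ)) * ∑ d ∈ i.divisors, ((ArithmeticFunction.moebius (i / d) : ℤ) : ℚ) * N d

/-- `π_w(N) = Σ_{|λ| = w} (−1)^{ℓ(λ)} Π_{i ≥ 1} C(a_i, λ_i)`, the sum over all partitions `λ`
of weight `w`, where `λ_i` is the number of parts of `λ` equal to `i` and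
`a_i = (1/i) Σ_{d ∣ i} μ(i/d) N d`. -/
noncomputable def piW (N : ℕ → ℚ) (w : ℕ) : ℚ :=
  ∑ p : Nat.Partition w, (-1 : ℚ) ^ (Multiset.card p.parts) *
    ∏ i ∈ p.parts.toFinset, genChoose (moebiusConv N i) (p.parts.count i)

section Aux

open PowerSeries

noncomputable def FF (i : ℕ) (a : ℚ) : PowerSeries ℚ :=
  PowerSeries.mk fun k => if i ∣ k then (-1 : ℚ)^(k/i) * genChoose a (k/i) else 0

noncomputable def uu (i : ℕ) : PowerSeries ℚ :=
  PowerSeries.mk fun k => if i ∣ (k+1) then (1:ℚ) else 0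

noncomputable def vv (c : ℚ) : PowerSeries ℚ := PowerSeries.mk fun k => c ^ k

lemma genChoose_zero (a : ℚ) : genChoose a 0 = 1 := by simp [genChoose]

lemma genChoose_one (a : ℚ) : genChoose a 1 = a := by simp [genChoose]

lemma genChoose_succ (a : ℚ) (m : ℕ) :
    ((m:ℚ)+1) * genChoose a (m+1) = (a - m) * genChoose a m := by
  rw [genChoose, genChoose, Finset.prod_range_succ, Nat.factorial_succ]
  push_cast
  have h1 : (Nat.factorial m : ℚ) ≠ 0 := by positivity
  field_simp


lemma one_sub_mul_uu (i : ℕ) (hi : 1 ≤ i) :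
    (1 - X^i : PowerSeries ℚ) * uu i = X^(i-1) := by
  ext k
  rw [sub_mul, one_mul, map_sub, coeff_X_pow_mul', coeff_X_pow, uu, coeff_mk]
  by_cases hdvd : i ∣ (k+1)
  · by_cases hk : k = i - 1
    · have h1 : ¬ i ≤ k := by omega
      have h2 : k + 1 = i := by omega
      have h3 : i ∣ k + 1 := ⟨1, by omega⟩
      have h4 : i - 1 + 1 = i := by omega
      have h5 : ¬ i ≤ i - 1 := by omega
      simp [hk, h1, h2, h3, h4, h5]
    · have hik : i ≤ k := by
        rcases hdvd with ⟨s, hs⟩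
        have hs0 : s ≠ 0 := by rintro rfl; omega
        have hs1 : s ≠ 1 := by rintro rfl; omega
        have h2s : 2 ≤ s := by omega
        have := Nat.mul_le_mul_left i h2s
        omega
      have h2 : i ∣ (k - i + 1) := by
        have h3 : k - i + 1 = (k+1) - i := by omega
        rw [h3]
        exact (Nat.dvd_sub hdvd dvd_rfl)
      simp [hdvd, hik, h2, hk]
  · have h2 : ∀ _ : i ≤ k, ¬ i ∣ (k - i + 1) := by
      intro h hcon
      exact hdvd (by have h4 : k + 1 = (k - i + 1) + i := by omega
                     rw [h4]; exact Nat.dvd_add hcon dvd_rfl)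
    have hk : k ≠ i - 1 := by rintro rfl; exact hdvd ⟨1, by omega⟩
    by_cases hik : i ≤ k <;> simp [hdvd, hik, hk, h2]

lemma vv_inv (c : ℚ) : (1 - C c * X : PowerSeries ℚ) * vv c = 1 := by
  ext k
  rw [sub_mul, one_mul, map_sub, mul_assoc, coeff_C_mul]
  have h1 : (X : PowerSeries ℚ) = X ^ 1 := (pow_one _).symm
  rw [h1, coeff_X_pow_mul']
  cases k with
  | zero => simp [vv]
  | succ m => simp [vv, coeff_one, pow_succ, mul_comm]

lemma coeff_FF (i : ℕ) (a : ℚ) (k : ℕ) :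
    coeff k (FF i a) = if i ∣ k then (-1 : ℚ)^(k/i) * genChoose a (k/i) else 0 := by
  simp [FF]

lemma constantCoeff_FF (i : ℕ) (a : ℚ) : coeff 0 (FF i a) = 1 := by
  simp [coeff_FF, genChoose_zero]

lemma deriv_FF (i : ℕ) (hi : 1 ≤ i) (a : ℚ) :
    d⁄dX ℚ (FF i a) = (C (-(i:ℚ)*a) * uu i) * FF i a := by
  have hne : (1 - X^i : PowerSeries ℚ) ≠ 0 := by
    intro h
    have h0 := congrArg (constantCoeff) h
    simp [zero_pow (by omega : i ≠ 0)] at h0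
  apply mul_left_cancel₀ hne
  have hrhs : (1 - X^i : PowerSeries ℚ) * ((C (-(i:ℚ)*a) * uu i) * FF i a)
      = C (-(i:ℚ)*a) * (X^(i-1) * FF i a) := by
    rw [← one_sub_mul_uu i hi]; ring
  rw [hrhs]
  ext k
  rw [sub_mul, one_mul, map_sub, coeff_X_pow_mul', coeff_C_mul, coeff_X_pow_mul',
    coeff_derivative, coeff_FF]
  have hco : coeff (k - i) (d⁄dX ℚ (FF i a))
      = coeff (k - i + 1) (FF i a) * ((k - i : ℕ) + 1) := coeff_derivative _ _
  by_cases hdvd : i ∣ (k+1)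
  · rcases hdvd with ⟨s, hs⟩
    have hs1 : 1 ≤ s := by
      rcases Nat.eq_zero_or_pos s with h | h
      · subst h; omega
      · exact h
    obtain ⟨m, rfl⟩ : ∃ m, s = m + 1 := ⟨s - 1, by omega⟩
    have hq : (k+1)/i = m + 1 := by rw [hs, Nat.mul_div_cancel_left _ (by omega)]
    cases m with
    | zero =>
      have hk1 : k + 1 = i := by omega
      have hik : ¬ i ≤ k := by omega
      have hle : i - 1 ≤ k := by omega
      have hk0 : k - (i-1) = 0 := by omega
      have hd1 : i ∣ k + 1 := Dvd.intro 1 (by omega)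
      rw [if_pos hd1, hq, if_neg hik, if_pos hle, hk0, coeff_FF,
        if_pos (dvd_zero i), Nat.zero_div]
      have hci : ((k:ℚ)+1) = (i:ℚ) := by exact_mod_cast congrArg (Nat.cast (R := ℚ)) hk1
      rw [hci]
      simp [genChoose_one, genChoose_zero]
      ring
    | succ m' =>
      set m := m' + 1 with hm
      have hx : i * (m + 1) = i * m + i := by ring
      have hik : i ≤ k := by
        have hy : 1 ≤ i * m := Nat.one_le_iff_ne_zero.2 (by positivity)
        omega
      have hsub : k - i + 1 = i * m := by omega
      have hd2 : i ∣ (k - i + 1) := ⟨m, hsub⟩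
      have hq2 : (k - i + 1)/i = m := by rw [hsub, Nat.mul_div_cancel_left _ (by omega)]
      have hle : i - 1 ≤ k := by omega
      have hsub2 : k - (i-1) = i * m := by omega
      have hd1 : i ∣ k + 1 := Dvd.intro _ hs.symm
      have hd3 : i ∣ i * m := Dvd.intro _ rfl
      rw [if_pos hd1, hq, if_pos hik, if_pos hle, hco, hsub2, coeff_FF,
        coeff_FF, if_pos hd2, if_pos hd3, hq2,
        Nat.mul_div_cancel_left _ (by omega : 0 < i)]
      have hrec := genChoose_succ a m
      have hc1 : ((k:ℚ)+1) = (i:ℚ) * ((m:ℚ)+1) := by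
        have h5 : (k:ℚ) + 1 = ((k+1 : ℕ) : ℚ) := by push_cast; ring
        rw [h5, hs]; push_cast; ring
      have hc2 : ((k - i : ℕ):ℚ) + 1 = (i:ℚ) * m := by
        have h5 : ((k - i : ℕ):ℚ) + 1 = ((k - i + 1 : ℕ) : ℚ) := by push_cast; ring
        rw [h5, hsub]; push_cast; ring
      rw [hc2, hc1, pow_succ]
      linear_combination (-(-1:ℚ)^m * (i:ℚ)) * hrec
  · have hc1 : (if i ∣ k + 1 then (-1:ℚ)^((k+1)/i) * genChoose a ((k+1)/i) else 0) = 0 :=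
      if_neg hdvd
    rw [hc1, zero_mul, zero_sub]
    by_cases hik : i ≤ k
    · have hne2 : ¬ i ∣ (k - i + 1) := by
        intro hcon
        exact hdvd (by have h4 : k + 1 = (k - i + 1) + i := by omega
                       rw [h4]; exact Nat.dvd_add hcon dvd_rfl)
      have hle : i - 1 ≤ k := by omega
      have hne3 : ¬ i ∣ (k - (i-1)) := by
        intro hcon
        exact hdvd (by have h4 : k + 1 = (k - (i-1)) + (i - 1) + 1 := by omega
                       have h5 : k + 1 = (k - (i-1)) + i := by omega
                       rw [h5]; exact Nat.dvd_add hcon dvd_rfl)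
      rw [if_pos hik, if_pos hle, hco, coeff_FF, coeff_FF, if_neg hne2, if_neg hne3]
      ring
    · by_cases hle : i - 1 ≤ k
      · have hne3 : ¬ i ∣ (k - (i-1)) := by
          intro hcon
          exact hdvd (by have h5 : k + 1 = (k - (i-1)) + i := by omega
                         rw [h5]; exact Nat.dvd_add hcon dvd_rfl)
        rw [if_neg hik, if_pos hle, coeff_FF, if_neg hne3]
        ring
      · rw [if_neg hik, if_neg hle]
        ring

lemma deriv_linear (c : ℚ) :
    d⁄dX ℚ (1 - C c * X : PowerSeries ℚ) = (C (-c) * vv c) * (1 - C c * X) := by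
  have h1 : (C (-c) * vv c) * (1 - C c * X) = C (-c) * ((1 - C c * X) * vv c) := by
    ring
  rw [h1, vv_inv, mul_one]
  rw [map_sub, Derivation.leibniz]
  simp

lemma coeff_eq_of_deriv (w : ℕ) (G P T T' : PowerSeries ℚ)
    (hG : d⁄dX ℚ G = T * G) (hP : d⁄dX ℚ P = T' * P)
    (h0 : coeff 0 G = coeff 0 P)
    (hT : ∀ k, k < w → coeff k T = coeff k T') :
    ∀ k, k ≤ w → coeff k G = coeff k P := by
  intro k
  induction k using Nat.strong_induction_on with
  | _ k ih =>
    intro hk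
    match k with
    | 0 => exact h0
    | (j+1) =>
      have h1 : coeff j (d⁄dX ℚ G) = coeff (j+1) G * ((j:ℚ)+1) := coeff_derivative _ _
      have h2 : coeff j (d⁄dX ℚ P) = coeff (j+1) P * ((j:ℚ)+1) := coeff_derivative _ _
      have h3 : coeff j (T * G) = coeff j (T' * P) := by
        rw [coeff_mul, coeff_mul]
        apply Finset.sum_congr rfl
        intro x hx
        rw [Finset.HasAntidiagonal.mem_antidiagonal] at hx
        rw [hT x.1 (by omega), ih x.2 (by omega) (by omega)]
      have h4 := h1.symm.trans (((congrArg (coeff j) hG).trans h3).trans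
        ((congrArg (coeff j) hP).symm.trans h2))
      have h5 : ((j:ℚ)+1) ≠ 0 := by positivity
      exact mul_right_cancel₀ h5 h4

lemma moebius_sum (N : ℕ → ℚ) (m : ℕ) (hm : 0 < m) :
    ∑ i ∈ m.divisors, (i:ℚ) * moebiusConv N i = N m := by
  have key : ∀ n : ℕ, n > 0 → ∑ x ∈ n.divisorsAntidiagonal,
      ((ArithmeticFunction.moebius x.fst : ℤ) : ℚ) * N x.snd = (n:ℚ) * moebiusConv N n := by
    intro n hn
    rw [Nat.sum_divisorsAntidiagonal'
      (f := fun x y => ((ArithmeticFunction.moebius x : ℤ) : ℚ) * N y)]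
    rw [moebiusConv]
    rw [← mul_assoc, mul_one_div, div_self (by exact_mod_cast hn.ne' : (n:ℚ) ≠ 0), one_mul]
  exact (ArithmeticFunction.sum_eq_iff_sum_mul_moebius_eq
    (f := fun i => (i:ℚ) * moebiusConv N i) (g := N)).2 (fun n hn => (key n hn)) m hm

lemma card_multiset_sum (s : Finset ℕ) (f : ℕ → Multiset ℕ) :
    Multiset.card (∑ i ∈ s, f i) = ∑ i ∈ s, Multiset.card (f i) := by
  induction s using Finset.induction_on with
  | empty => simp
  | @insert j s hjs ih => simp [Finset.sum_insert hjs, ih]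

/-- The partition attached to `l ∈ finsuppAntidiag` with `i ∣ l i`. -/
noncomputable def partOf (w : ℕ) (l : ℕ →₀ ℕ) (hsum : ∑ i ∈ Finset.Icc 1 w, l i = w)
    (hdvd : ∀ i ∈ Finset.Icc 1 w, i ∣ l i) : Nat.Partition w where
  parts := ∑ i ∈ Finset.Icc 1 w, Multiset.replicate (l i / i) i
  parts_pos := by
    intro i hi
    rw [Multiset.mem_sum] at hi
    obtain ⟨j, hj, hij⟩ := hi
    rw [Multiset.eq_of_mem_replicate hij]
    exact lt_of_lt_of_le Nat.zero_lt_one (Finset.mem_Icc.1 hj).1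
  parts_sum := by
    rw [Multiset.sum_sum]
    refine (Finset.sum_congr rfl ?_).trans hsum
    intro i hi
    rw [Multiset.sum_replicate, smul_eq_mul]
    exact Nat.div_mul_cancel (hdvd i hi)

lemma count_partOf (w : ℕ) (l : ℕ →₀ ℕ) (hsum : ∑ i ∈ Finset.Icc 1 w, l i = w)
    (hdvd : ∀ i ∈ Finset.Icc 1 w, i ∣ l i) (x : ℕ) :
    (partOf w l hsum hdvd).parts.count x
      = if x ∈ Finset.Icc 1 w then l x / x else 0 := by
  rw [partOf, Multiset.count_sum']
  rw [Finset.sum_congr rfl (fun i _ => Multiset.count_replicate x i (l i / i))]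
  simp [Finset.sum_ite_eq' (Finset.Icc 1 w) x (fun i => l i / i)]

lemma mem_Icc_of_mem_parts {w : ℕ} (p : Nat.Partition w) {x : ℕ} (hx : x ∈ p.parts) :
    x ∈ Finset.Icc 1 w := by
  rw [Finset.mem_Icc]
  refine ⟨p.parts_pos hx, ?_⟩
  rw [← p.parts_sum]
  exact Multiset.le_sum_of_mem hx

/-- The finsupp attached to a partition. -/
noncomputable def lOf (w : ℕ) (p : Nat.Partition w) : ℕ →₀ ℕ :=
  Finsupp.onFinset (Finset.Icc 1 w) (fun i => i * p.parts.count i)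
    (by
      intro i hi
      have h : p.parts.count i ≠ 0 := by
        intro h; exact hi (by simp [h])
      exact mem_Icc_of_mem_parts p (Multiset.count_pos.1 (Nat.pos_of_ne_zero h)))

lemma lOf_apply (w : ℕ) (p : Nat.Partition w) (i : ℕ) :
    lOf w p i = i * p.parts.count i := rfl

lemma lOf_sum (w : ℕ) (p : Nat.Partition w) : ∑ i ∈ Finset.Icc 1 w, lOf w p i = w := by
  have h1 : ∑ i ∈ Finset.Icc 1 w, lOf w p i = ∑ i ∈ p.parts.toFinset, i * p.parts.count i := by
    rw [← Finset.sum_subset (fun x hx => mem_Icc_of_mem_parts p (Multiset.mem_toFinset.1 hx))]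
    · exact Finset.sum_congr rfl (fun i _ => rfl)
    · intro x _ hx
      rw [lOf_apply, Multiset.count_eq_zero_of_notMem (fun h => hx (Multiset.mem_toFinset.2 h)),
        mul_zero]
  have h2 : ∑ i ∈ p.parts.toFinset, i * Multiset.count i p.parts = p.parts.sum := by
    rw [Finset.sum_multiset_count p.parts]
    exact (Finset.sum_congr rfl fun i _ => by rw [smul_eq_mul, mul_comm]).symm
  rw [h1, h2, p.parts_sum]

/-- Key combinatorial identity. -/
lemma coeff_prod_FF (w : ℕ) (hw : 1 ≤ w) (a : ℕ → ℚ) :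
    coeff w (∏ i ∈ Finset.Icc 1 w, FF i (a i)) =
      ∑ p : Nat.Partition w, (-1 : ℚ) ^ (Multiset.card p.parts) *
        ∏ i ∈ p.parts.toFinset, genChoose (a i) (p.parts.count i) := by
  rw [PowerSeries.coeff_prod]
  have hzero : ∀ l ∈ (Finset.Icc 1 w).finsuppAntidiag w,
      (∏ i ∈ Finset.Icc 1 w, coeff (l i) (FF i (a i))) ≠ 0 →
      ∀ i ∈ Finset.Icc 1 w, i ∣ l i := by
    intro l hl hne i hi
    by_contra hdvd
    exact hne (Finset.prod_eq_zero hi (by rw [coeff_FF, if_neg hdvd]))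
  rw [← Finset.sum_filter_of_ne hzero]
  refine Finset.sum_bij'
    (i := fun l hl => partOf w l
        (Finset.mem_finsuppAntidiag.1 (Finset.mem_filter.1 hl).1).1
        (Finset.mem_filter.1 hl).2)
    (j := fun p _ => lOf w p)
    (fun l hl => Finset.mem_univ _)
    (fun p _ => ?_) (fun l hl => ?_) (fun p _ => ?_) (fun l hl => ?_)
  · -- lOf w p ∈ filtered set
    rw [Finset.mem_filter]
    constructor
    · rw [Finset.mem_finsuppAntidiag]
      exact ⟨lOf_sum w p, Finsupp.support_onFinset_subset⟩
    · exact fun i _ => dvd_mul_right i _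
  · -- left inverse
    beta_reduce
    set hs := (Finset.mem_finsuppAntidiag.1 (Finset.mem_filter.1 hl).1).1 with hhs
    set hd := (Finset.mem_filter.1 hl).2 with hhd
    have hsupp := (Finset.mem_finsuppAntidiag.1 (Finset.mem_filter.1 hl).1).2
    ext x
    rw [lOf_apply, count_partOf]
    by_cases hx : x ∈ Finset.Icc 1 w
    · rw [if_pos hx]
      exact Nat.mul_div_cancel' (hd x hx)
    · rw [if_neg hx, mul_zero]
      exact (Finsupp.notMem_support_iff.1 (fun h => hx (hsupp h))).symm
  · -- right inverse
    beta_reduce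
    apply Nat.Partition.ext
    apply Multiset.ext.2
    intro x
    rw [count_partOf]
    by_cases hx : x ∈ Finset.Icc 1 w
    · rw [if_pos hx, lOf_apply,
        Nat.mul_div_cancel_left _ (lt_of_lt_of_le Nat.zero_lt_one (Finset.mem_Icc.1 hx).1)]
    · rw [if_neg hx]
      exact (Multiset.count_eq_zero_of_notMem (fun h => hx (mem_Icc_of_mem_parts p h))).symm
  · -- values agree
    beta_reduce
    set hs := (Finset.mem_finsuppAntidiag.1 (Finset.mem_filter.1 hl).1).1 with hhs
    set hd := (Finset.mem_filter.1 hl).2 with hhd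
    have h1 : ∀ i ∈ Finset.Icc 1 w, coeff (l i) (FF i (a i))
        = (-1:ℚ)^(l i / i) * genChoose (a i) (l i / i) := by
      intro i hi
      rw [coeff_FF, if_pos (hd i hi)]
    rw [Finset.prod_congr rfl h1, Finset.prod_mul_distrib, Finset.prod_pow_eq_pow_sum]
    have hcard : Multiset.card (partOf w l hs hd).parts = ∑ i ∈ Finset.Icc 1 w, l i / i := by
      rw [partOf, card_multiset_sum]
      exact Finset.sum_congr rfl (fun i _ => Multiset.card_replicate _ _)
    rw [hcard]
    congr 1
    have hsub : (partOf w l hs hd).parts.toFinset ⊆ Finset.Icc 1 w :=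
      fun x hx => mem_Icc_of_mem_parts _ (Multiset.mem_toFinset.1 hx)
    have e1 : ∏ i ∈ (partOf w l hs hd).parts.toFinset,
        genChoose (a i) ((partOf w l hs hd).parts.count i)
        = ∏ i ∈ (partOf w l hs hd).parts.toFinset, genChoose (a i) (l i / i) := by
      refine Finset.prod_congr rfl (fun x hx => ?_)
      have hc := count_partOf w l hs hd x
      rw [if_pos (hsub hx)] at hc
      rw [hc]
    have e2 : ∏ i ∈ Finset.Icc 1 w, genChoose (a i) (l i / i)
        = ∏ i ∈ (partOf w l hs hd).parts.toFinset, genChoose (a i) (l i / i) := by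
      refine (Finset.prod_subset hsub (fun x hx hnx => ?_)).symm
      have hc := count_partOf w l hs hd x
      rw [if_pos hx] at hc
      have hc0 : (partOf w l hs hd).parts.count x = 0 :=
        Multiset.count_eq_zero_of_notMem (fun h => hnx (Multiset.mem_toFinset.2 h))
      rw [← hc, hc0, genChoose_zero]
    exact e2.trans e1.symm

lemma deriv_prod {ι : Type*} (s : Finset ι) (g t : ι → PowerSeries ℚ)
    (h : ∀ i ∈ s, d⁄dX ℚ (g i) = t i * g i) :
    d⁄dX ℚ (∏ i ∈ s, g i) = (∑ i ∈ s, t i) * ∏ i ∈ s, g i := by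
  classical
  induction s using Finset.induction_on with
  | empty => simp
  | @insert j s hjs ih =>
    rw [Finset.prod_insert hjs, Finset.sum_insert hjs]
    rw [Derivation.leibniz]
    rw [ih (fun i hi => h i (Finset.mem_insert_of_mem hi)),
      h j (Finset.mem_insert_self j s)]
    simp only [smul_eq_mul]
    ring

lemma coeff_T (w : ℕ) (a : ℕ → ℚ) (k : ℕ) :
    coeff k (∑ i ∈ Finset.Icc 1 w, C (-(i:ℚ) * a i) * uu i)
      = -∑ i ∈ Finset.Icc 1 w, (if i ∣ (k+1) then (i:ℚ) * a i else 0) := by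
  rw [map_sum, ← Finset.sum_neg_distrib]
  refine Finset.sum_congr rfl (fun i _ => ?_)
  rw [coeff_C_mul, uu, coeff_mk]
  by_cases h : i ∣ (k+1) <;> simp [h]

lemma coeff_T' (nn : ℕ) (c : ℕ → ℚ) (k : ℕ) :
    coeff k (∑ j ∈ Finset.range nn, C (-(c j)) * vv (c j))
      = -∑ j ∈ Finset.range nn, (c j)^(k+1) := by
  rw [map_sum, ← Finset.sum_neg_distrib]
  refine Finset.sum_congr rfl (fun j _ => ?_)
  rw [coeff_C_mul, vv, coeff_mk, pow_succ, mul_comm ((c j)^k), neg_mul]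

lemma filter_dvd_Icc (w m : ℕ) (hm : 1 ≤ m) (hmw : m ≤ w) :
    Finset.filter (fun i => i ∣ m) (Finset.Icc 1 w) = m.divisors := by
  ext i
  rw [Finset.mem_filter, Finset.mem_Icc, Nat.mem_divisors]
  constructor
  · rintro ⟨⟨h1, h2⟩, h3⟩
    exact ⟨h3, by omega⟩
  · rintro ⟨h1, h2⟩
    have hi1 : 1 ≤ i := by
      rcases Nat.eq_zero_or_pos i with h | h
      · subst h; rw [Nat.zero_dvd] at h1; omega
      · exact h
    exact ⟨⟨hi1, le_trans (Nat.le_of_dvd (by omega) h1) hmw⟩, h1⟩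

lemma coeff_P_high (nn w : ℕ) (c : ℕ → ℚ) (hw : nn + 1 < w) :
    coeff w (∏ j ∈ Finset.range (nn+1), (1 - C (c j) * X)) = 0 := by
  rw [PowerSeries.coeff_prod]
  refine Finset.sum_eq_zero (fun l hl => ?_)
  rw [Finset.mem_finsuppAntidiag] at hl
  have hbig : ∃ j ∈ Finset.range (nn+1), 2 ≤ l j := by
    by_contra h
    push_neg at h
    have h2 : ∑ j ∈ Finset.range (nn+1), l j ≤ ∑ _j ∈ Finset.range (nn+1), 1 :=
      Finset.sum_le_sum (fun j hj => by have := h j hj; omega)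
    rw [Finset.sum_const, Finset.card_range, smul_eq_mul, mul_one] at h2
    rw [hl.1] at h2
    omega
  obtain ⟨j, hj, h2⟩ := hbig
  refine Finset.prod_eq_zero hj ?_
  rw [map_sub, coeff_C_mul, PowerSeries.coeff_one, PowerSeries.coeff_X,
    if_neg (by omega : ¬ l j = 0), if_neg (by omega : ¬ l j = 1), mul_zero, sub_zero]

end Aux

/-- For `n ≥ 0`, a positive integer `q`, and
`N r = 1 + q^r + q^{2r} + ⋯ + q^{nr}` (the point count of `ℙ^n` over `𝔽_{q^r}` when `q` is a
prime power), one has `π_w = 0` for every `w ≥ n + 2`. -/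
theorem pi_projective_space_vanishes (n : ℕ) (q : ℕ) (hq : 1 ≤ q)
    (N : ℕ → ℚ)
    (hN : ∀ r : ℕ, 1 ≤ r → N r = ∑ j ∈ Finset.range (n + 1), (q : ℚ) ^ (j * r))
    (w : ℕ) (hw : n + 2 ≤ w) :
    piW N w = 0 := by
  classical
  open PowerSeries in
  set a : ℕ → ℚ := moebiusConv N with ha
  set G := ∏ i ∈ Finset.Icc 1 w, FF i (a i) with hGdef
  set P := ∏ j ∈ Finset.range (n+1), (1 - C ((q:ℚ)^j) * X) with hPdef
  set T := ∑ i ∈ Finset.Icc 1 w, C (-(i:ℚ) * a i) * uu i with hTdef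
  set T' := ∑ j ∈ Finset.range (n+1), C (-((q:ℚ)^j)) * vv ((q:ℚ)^j) with hT'def
  have hG : d⁄dX ℚ G = T * G :=
    deriv_prod _ _ _ (fun i hi => deriv_FF i (Finset.mem_Icc.1 hi).1 (a i))
  have hP : d⁄dX ℚ P = T' * P :=
    deriv_prod _ _ _ (fun j _ => deriv_linear ((q:ℚ)^j))
  have h0 : coeff 0 G = coeff 0 P := by
    have hcF : ∀ (i : ℕ) (a' : ℚ), constantCoeff (FF i a') = 1 := fun i a' => by
      have h := constantCoeff_FF i a'
      rwa [coeff_zero_eq_constantCoeff] at h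
    rw [hGdef, hPdef, coeff_zero_eq_constantCoeff, map_prod, map_prod]
    rw [Finset.prod_congr rfl fun i _ => hcF i (a i)]
    rw [Finset.prod_congr rfl fun j (_ : j ∈ Finset.range (n+1)) =>
      (by simp : constantCoeff (1 - C ((q:ℚ)^j) * X) = 1)]
    simp
  have hT : ∀ k, k < w → coeff k T = coeff k T' := by
    intro k hk
    rw [hTdef, hT'def, coeff_T, coeff_T']
    rw [← Finset.sum_filter, filter_dvd_Icc w (k+1) (by omega) (by omega)]
    rw [moebius_sum N (k+1) (by omega), hN (k+1) (by omega)]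
    congr 1
    exact Finset.sum_congr rfl (fun j _ => by rw [← pow_mul])
  have hGP := coeff_eq_of_deriv w G P T T' hG hP h0 hT w le_rfl
  have hPw : coeff w P = 0 := coeff_P_high n w (fun j => (q:ℚ)^j) (by omega)
  have hGw : coeff w G = piW N w := by
    rw [hGdef, coeff_prod_FF w (by omega) a]
    rfl
  rw [← hGw, hGP, hPw]
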